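/- Let I be an ideal (in our sense) on a countably infinite set X which is countably generated, i.e., there exists a sequence (G_n)_{n≥1} of members of I such that every A ∈ I is contained in the union of finitely many of the sets G_n together with a finite set. Then I is regular, i.e., I = Î. -/

import Mathlib

/-- The set of all finitary operations on `X`: an element of arity index `n`
is an `(n+1)`-ary operation, so that all arities are `≥ 1`. -/
abbrev Ops (X : Type) : Type := Σ n : ℕ, (Fin (n + 1) → X) → X

/-- `opImage f A` is the image `f[A^n]` of the `n`-th power of `A` under the
`n`-ary operation `f`. -/
def opImage {X : Type} (f : Ops X) (A : Set X) : Set X :=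
  f.2 '' {x | ∀ i, x i ∈ A}

/-- An ideal "in our sense": closed under subsets and finite unions, contains all
finite sets, contains at least one infinite set, and does not contain `X`. -/
def IsIdealInOurSense {X : Type} (I : Set (Set X)) : Prop :=
  (∀ A ∈ I, ∀ B ⊆ A, B ∈ I) ∧
  (∀ A ∈ I, ∀ B ∈ I, A ∪ B ∈ I) ∧
  (∀ A : Set X, A.Finite → A ∈ I) ∧
  (∃ A ∈ I, A.Infinite) ∧
  (Set.univ : Set X) ∉ I

/-- The clone `C_I` induced by a collection of sets `I`: all operations mapping
powers of `I`-sets into `I`. -/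
def idealClone {X : Type} (I : Set (Set X)) : Set (Ops X) :=
  {f | ∀ A ∈ I, opImage f A ∈ I}

/-- The unary part `C_I^{(1)}` of the clone induced by `I`. -/
def unaryPart {X : Type} (I : Set (Set X)) : Set (X → X) :=
  {f | ∀ A ∈ I, f '' A ∈ I}

/-- A clone: a set of finitary operations containing all projections and closed
under composition. -/
def IsClone {X : Type} (C : Set (Ops X)) : Prop :=
  (∀ (n : ℕ) (i : Fin (n + 1)), (⟨n, fun x => x i⟩ : Ops X) ∈ C) ∧
  ∀ (n m : ℕ) (f : (Fin (n + 1) → X) → X) (g : Fin (n + 1) → (Fin (m + 1) → X) → X),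
    (⟨n, f⟩ : Ops X) ∈ C → (∀ i, (⟨m, g i⟩ : Ops X) ∈ C) →
    (⟨m, fun x => f fun i => g i x⟩ : Ops X) ∈ C

/-- The clone generated by a set of operations. -/
def cloneGen {X : Type} (F : Set (Ops X)) : Set (Ops X) :=
  ⋂₀ {C : Set (Ops X) | IsClone C ∧ F ⊆ C}

/-- A precomplete clone: a proper clone whose only proper cover is the full clone `O`. -/
def IsPrecompleteClone {X : Type} (C : Set (Ops X)) : Prop :=
  IsClone C ∧ C ≠ Set.univ ∧
  ∀ D : Set (Ops X), IsClone D → C ⊂ D → D = Set.univ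

/-- The regularization `Î` of `I`: all sets `A` such that every infinite subset
of `A` contains an infinite member of `I`. -/
def regularization {X : Type} (I : Set (Set X)) : Set (Set X) :=
  {A | ∀ B ⊆ A, B.Infinite → ∃ C ⊆ B, C.Infinite ∧ C ∈ I}

noncomputable def pickSeq {X : Type} (S : ℕ → Set X) (hS : ∀ n, (S n).Infinite) : ℕ → X
  | 0 => (hS 0).nonempty.choose
  | n+1 => (((hS (n+1)).diff
      (Set.finite_range (fun m : Fin (n+1) => pickSeq S hS m))).nonempty).choose

theorem pickSeq_mem {X : Type} (S : ℕ → Set X) (hS : ∀ n, (S n).Infinite) (n : ℕ) :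
    pickSeq S hS n ∈ S n := by
  cases n with
  | zero => rw [pickSeq]; exact (hS 0).nonempty.choose_spec
  | succ n =>
    have := (((hS (n+1)).diff
      (Set.finite_range (fun m : Fin (n+1) => pickSeq S hS m))).nonempty).choose_spec
    rw [pickSeq]
    exact this.1

theorem pickSeq_ne {X : Type} (S : ℕ → Set X) (hS : ∀ n, (S n).Infinite)
    {m n : ℕ} (h : m < n) : pickSeq S hS n ≠ pickSeq S hS m := by
  obtain ⟨k, rfl⟩ := Nat.exists_eq_add_of_lt h
  have hsp := (((hS (m+k+1)).diff
      (Set.finite_range (fun j : Fin (m+k+1) => pickSeq S hS j))).nonempty).choose_spec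
  rw [pickSeq]
  intro heq
  exact hsp.2 ⟨⟨m, by omega⟩, heq.symm⟩

theorem pickSeq_inj {X : Type} (S : ℕ → Set X) (hS : ∀ n, (S n).Infinite) :
    Function.Injective (pickSeq S hS) := by
  intro a b hab
  rcases lt_trichotomy a b with h | h | h
  · exact absurd hab.symm (pickSeq_ne S hS h)
  · exact h
  · exact absurd hab (pickSeq_ne S hS h)

/-- Every countably generated ideal (in our sense) is regular. -/
theorem stmt1 {X : Type} [Countable X] [Infinite X]
    {I : Set (Set X)} (hI : IsIdealInOurSense I)
    (hgen : ∃ G : ℕ → Set X, (∀ n, G n ∈ I) ∧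
      ∀ A ∈ I, ∃ (s : Finset ℕ) (F : Set X), F.Finite ∧ A ⊆ F ∪ ⋃ n ∈ s, G n) :
    I = regularization I := by
  obtain ⟨hsub, hunion, hfin, -, -⟩ := hI
  obtain ⟨G, hGmem, hGgen⟩ := hgen
  have hbU : ∀ s : Finset ℕ, (⋃ n ∈ s, G n) ∈ I := by
    intro s
    induction s using Finset.induction with
    | empty => simpa using hfin ∅ Set.finite_empty
    | insert _ _ h ih =>
      rw [Finset.set_biUnion_insert]
      exact hunion _ (hGmem _) _ ih
  ext A
  constructor
  · intro hA B hB hBinf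
    exact ⟨B, subset_rfl, hBinf, hsub A hA B hB⟩
  · intro hA
    by_contra hAI
    set S : ℕ → Set X := fun n => A \ ⋃ i ∈ Finset.range n, G i with hSdef
    have hS : ∀ n, (S n).Infinite := by
      intro n
      by_contra h
      rw [Set.not_infinite] at h
      apply hAI
      have hsup : (S n ∪ ⋃ i ∈ Finset.range n, G i) ∈ I :=
        hunion _ (hfin _ h) _ (hbU _)
      exact hsub _ hsup A (fun x hx => by
        by_cases hxg : x ∈ ⋃ i ∈ Finset.range n, G i
        · exact Or.inr hxg
        · exact Or.inl ⟨hx, hxg⟩)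
    set b := pickSeq S hS with hb
    have hbA : ∀ n, b n ∈ A := fun n => (pickSeq_mem S hS n).1
    have hbG : ∀ n k, b n ∈ G k → n ≤ k := by
      intro n k hnk
      by_contra h
      push_neg at h
      exact (pickSeq_mem S hS n).2
        (Set.mem_biUnion (Finset.mem_range.2 h) hnk)
    obtain ⟨C, hCB, hCinf, hCI⟩ := hA (Set.range b) (Set.range_subset_iff.2 hbA)
      (Set.infinite_range_of_injective (pickSeq_inj S hS))
    obtain ⟨s, F, hFfin, hCcov⟩ := hGgen C hCI
    apply hCinf
    have hsub2 : C ⊆ F ∪ ⋃ n ∈ s, (C ∩ G n) := by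
      intro x hx
      rcases hCcov hx with h | h
      · exact Or.inl h
      · obtain ⟨n, hn, hxn⟩ := by simpa using h
        exact Or.inr (Set.mem_biUnion hn ⟨hx, hxn⟩)
    refine Set.Finite.subset (hFfin.union (Set.Finite.biUnion s.finite_toSet ?_)) hsub2
    intro k _
    have : C ∩ G k ⊆ b '' {m | m ≤ k} := by
      intro x ⟨hxC, hxG⟩
      obtain ⟨m, rfl⟩ := hCB hxC
      exact ⟨m, hbG m k hxG, rfl⟩
    exact Set.Finite.subset ((Set.finite_Iic k).image b) this
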